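/- Let k be a field of prime characteristic p, let n be an integer with n > 1 that is not divisible by p, let e be a nonnegative integer with q := p^e > n, and let b be the unique integer with p^e ≡ b (mod n) and 1 ≤ b ≤ n−1. Then the images in k[X,Y]/(X^q, Y^q, X^n − Y^n) of the monomials X^i·Y^j, where 0 ≤ i < n, 0 ≤ j < q, and not both i ≥ b and j ≥ q − b, form a basis of k[X,Y]/(X^q, Y^q, X^n − Y^n) as a vector space over k. -/

import Mathlib

open MvPolynomial

namespace Stmt12Aux

def nf1 (n i : ℕ) : ℕ := i % n
def nf2 (n i j : ℕ) : ℕ := j + (i / n) * n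
def dead (n q b i j : ℕ) : Prop := q ≤ nf2 n i j ∨ (b ≤ nf1 n i ∧ q - b ≤ nf2 n i j)

instance (n q b i j : ℕ) : Decidable (dead n q b i j) := by unfold dead; infer_instance

noncomputable def gfun (k : Type*) [Field k] (n q b i j : ℕ) : (ℕ × ℕ) →₀ k :=
  if dead n q b i j then 0 else Finsupp.single (nf1 n i, nf2 n i j) 1

variable {k : Type*} [Field k] {n q b : ℕ}

lemma dead_Xq (hn : 1 < n) (hq : n < q) (hqb : q % n = b) (i j : ℕ) :
    dead n q b (i + q) j := by
  have h0 : 0 < n := by omega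
  have hA : i % n + i / n * n = i := Nat.mod_add_div' i n
  have hB : (i + q) % n + (i + q) / n * n = i + q := Nat.mod_add_div' (i + q) n
  have hAlt : i % n < n := Nat.mod_lt _ h0
  have hBlt : (i + q) % n < n := Nat.mod_lt _ h0
  have hblt : b < n := hqb ▸ Nat.mod_lt _ h0
  have h1 : (i + q) % n = (i % n + b) % n := by
    conv_lhs => rw [Nat.add_mod, hqb]
  have h2 : (i % n + b < n ∧ (i + q) % n = i % n + b) ∨
      (n ≤ i % n + b ∧ (i + q) % n = i % n + b - n) := by
    rcases lt_or_ge (i % n + b) n with h | h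
    · exact Or.inl ⟨h, by rw [h1, Nat.mod_eq_of_lt h]⟩
    · refine Or.inr ⟨h, ?_⟩
      rw [h1, Nat.mod_eq_sub_mod h, Nat.mod_eq_of_lt (by omega)]
  unfold dead nf1 nf2
  omega

lemma dead_Yq (i j : ℕ) : dead n q b i (j + q) := by
  unfold dead nf2; left; omega

lemma gfun_Xq (hn : 1 < n) (hq : n < q) (hqb : q % n = b) (i j : ℕ) :
    gfun k n q b (i + q) j = 0 := by
  rw [gfun, if_pos (dead_Xq hn hq hqb i j)]

lemma gfun_Yq (i j : ℕ) : gfun k n q b i (j + q) = 0 := by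
  rw [gfun, if_pos (dead_Yq i j)]

lemma gfun_step (hn : 1 < n) (i j : ℕ) :
    gfun k n q b (i + n) j = gfun k n q b i (j + n) := by
  have h0 : 0 < n := by omega
  have h1 : nf1 n (i + n) = nf1 n i := Nat.add_mod_right i n
  have h2 : nf2 n (i + n) j = nf2 n i (j + n) := by
    unfold nf2
    rw [Nat.add_div_right _ h0]
    ring
  unfold gfun dead
  simp only [h1, h2]

lemma gfun_basis (hn : 1 < n) (i j : ℕ) (hi : i < n) (hj : j < q)
    (hc : ¬ (b ≤ i ∧ q - b ≤ j)) :
    gfun k n q b i j = Finsupp.single (i, j) 1 := by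
  have h1 : nf1 n i = i := Nat.mod_eq_of_lt hi
  have h2 : nf2 n i j = j := by unfold nf2; rw [Nat.div_eq_of_lt hi]; ring
  rw [gfun, if_neg, h1, h2]
  unfold dead
  rw [h1, h2]
  omega

noncomputable def Nmap (k : Type*) [Field k] (n q b : ℕ) :
    MvPolynomial (Fin 2) k →ₗ[k] ((ℕ × ℕ) →₀ k) :=
  (basisMonomials (Fin 2) k).constr k (fun d => gfun k n q b (d 0) (d 1))

lemma Nmap_monomial (d : Fin 2 →₀ ℕ) (c : k) :
    Nmap k n q b (monomial d c) = c • gfun k n q b (d 0) (d 1) := by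
  have h : (monomial d c : MvPolynomial (Fin 2) k) = c • monomial d 1 := by
    rw [smul_monomial, smul_eq_mul, mul_one]
  have hbm : (MvPolynomial.basisMonomials (Fin 2) k) d = monomial d 1 := by
    rw [coe_basisMonomials]
  rw [h, map_smul, ← hbm, Nmap, Module.Basis.constr_basis]

lemma Nmap_XY (i j : ℕ) :
    Nmap k n q b (X 0 ^ i * X 1 ^ j) = gfun k n q b i j := by
  have h : (X 0 ^ i * X 1 ^ j : MvPolynomial (Fin 2) k)
      = monomial (Finsupp.single 0 i + Finsupp.single 1 j) 1 := by
    rw [X_pow_eq_monomial, X_pow_eq_monomial, monomial_mul, mul_one]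
  rw [h, Nmap_monomial, one_smul]
  congr 1 <;> simp [Finsupp.single_apply]

lemma Nmap_mul_Xq (hn : 1 < n) (hq : n < q) (hqb : q % n = b)
    (P : MvPolynomial (Fin 2) k) : Nmap k n q b (P * X 0 ^ q) = 0 := by
  induction P using MvPolynomial.induction_on' with
  | monomial d c =>
    rw [X_pow_eq_monomial, monomial_mul, mul_one, Nmap_monomial]
    have h0 : (d + Finsupp.single (0 : Fin 2) q) 0 = d 0 + q := by simp
    have h1 : (d + Finsupp.single (0 : Fin 2) q) 1 = d 1 := by simp [Finsupp.single_apply]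
    rw [h0, h1, gfun_Xq hn hq hqb, smul_zero]
  | add f g hf hg => rw [add_mul, map_add, hf, hg, add_zero]

lemma Nmap_mul_Yq (P : MvPolynomial (Fin 2) k) : Nmap k n q b (P * X 1 ^ q) = 0 := by
  induction P using MvPolynomial.induction_on' with
  | monomial d c =>
    rw [X_pow_eq_monomial, monomial_mul, mul_one, Nmap_monomial]
    have h0 : (d + Finsupp.single (1 : Fin 2) q) 0 = d 0 := by simp [Finsupp.single_apply]
    have h1 : (d + Finsupp.single (1 : Fin 2) q) 1 = d 1 + q := by simp
    rw [h0, h1, gfun_Yq, smul_zero]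
  | add f g hf hg => rw [add_mul, map_add, hf, hg, add_zero]

lemma Nmap_mul_XnYn (hn : 1 < n) (P : MvPolynomial (Fin 2) k) :
    Nmap k n q b (P * (X 0 ^ n - X 1 ^ n)) = 0 := by
  induction P using MvPolynomial.induction_on' with
  | monomial d c =>
    rw [mul_sub, map_sub, X_pow_eq_monomial, X_pow_eq_monomial, monomial_mul,
      monomial_mul, mul_one, Nmap_monomial, Nmap_monomial]
    have h0 : (d + Finsupp.single (0 : Fin 2) n) 0 = d 0 + n := by simp
    have h1 : (d + Finsupp.single (0 : Fin 2) n) 1 = d 1 := by simp [Finsupp.single_apply]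
    have h2 : (d + Finsupp.single (1 : Fin 2) n) 0 = d 0 := by simp [Finsupp.single_apply]
    have h3 : (d + Finsupp.single (1 : Fin 2) n) 1 = d 1 + n := by simp
    rw [h0, h1, h2, h3, gfun_step hn, sub_self]
  | add f g hf hg => rw [add_mul, map_add, hf, hg, add_zero]

lemma Nmap_ideal (hn : 1 < n) (hq : n < q) (hqb : q % n = b)
    {f : MvPolynomial (Fin 2) k}
    (hf : f ∈ Ideal.span {(X 0 : MvPolynomial (Fin 2) k) ^ q, X 1 ^ q,
      X 0 ^ n - X 1 ^ n}) : Nmap k n q b f = 0 := by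
  rw [show ({(X 0 : MvPolynomial (Fin 2) k) ^ q, X 1 ^ q, X 0 ^ n - X 1 ^ n} :
      Set (MvPolynomial (Fin 2) k))
    = insert ((X 0 : MvPolynomial (Fin 2) k) ^ q)
        (insert ((X 1 : MvPolynomial (Fin 2) k) ^ q)
          {(X 0 : MvPolynomial (Fin 2) k) ^ n - X 1 ^ n}) from rfl,
    Ideal.mem_span_insert] at hf
  obtain ⟨a, z, hz, rfl⟩ := hf
  rw [Ideal.mem_span_insert] at hz
  obtain ⟨a', z', hz', rfl⟩ := hz
  rw [Ideal.mem_span_singleton'] at hz'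
  obtain ⟨a'', rfl⟩ := hz'
  rw [map_add, map_add, Nmap_mul_Xq hn hq hqb, Nmap_mul_Yq, Nmap_mul_XnYn hn]
  simp


variable (n q b) in
lemma mk_XnYn :
    Ideal.Quotient.mk (Ideal.span {(X 0 : MvPolynomial (Fin 2) k) ^ q, X 1 ^ q,
      X 0 ^ n - X 1 ^ n}) (X 0 ^ n) = Ideal.Quotient.mk _ (X 1 ^ n) :=
  Ideal.Quotient.eq.mpr (Ideal.subset_span (by simp))

variable (n q b) in
lemma mk_Yq :
    Ideal.Quotient.mk (Ideal.span {(X 0 : MvPolynomial (Fin 2) k) ^ q, X 1 ^ q,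
      X 0 ^ n - X 1 ^ n}) (X 1 ^ q) = 0 :=
  Ideal.Quotient.eq_zero_iff_mem.mpr (Ideal.subset_span (by simp))

variable (n q b) in
lemma mk_Xq :
    Ideal.Quotient.mk (Ideal.span {(X 0 : MvPolynomial (Fin 2) k) ^ q, X 1 ^ q,
      X 0 ^ n - X 1 ^ n}) (X 0 ^ q) = 0 :=
  Ideal.Quotient.eq_zero_iff_mem.mpr (Ideal.subset_span (by simp))

variable (n q b) in
lemma mk_step (i j : ℕ) :
    Ideal.Quotient.mk (Ideal.span {(X 0 : MvPolynomial (Fin 2) k) ^ q, X 1 ^ q,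
      X 0 ^ n - X 1 ^ n}) (X 0 ^ (i + n) * X 1 ^ j)
    = Ideal.Quotient.mk _ (X 0 ^ i * X 1 ^ (j + n)) := by
  set I := Ideal.span {(X 0 : MvPolynomial (Fin 2) k) ^ q, X 1 ^ q, X 0 ^ n - X 1 ^ n}
  have h1 : Ideal.Quotient.mk I (X 0 ^ (i + n) * X 1 ^ j)
      = Ideal.Quotient.mk I (X 0 ^ i * X 1 ^ j) * Ideal.Quotient.mk I (X 0 ^ n) := by
    rw [← map_mul]; congr 1; ring
  have h2 : Ideal.Quotient.mk I (X 0 ^ i * X 1 ^ (j + n))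
      = Ideal.Quotient.mk I (X 0 ^ i * X 1 ^ j) * Ideal.Quotient.mk I (X 1 ^ n) := by
    rw [← map_mul]; congr 1; ring
  rw [h1, h2, mk_XnYn]

variable (n q b) in
lemma mk_reduce (a i j : ℕ) :
    Ideal.Quotient.mk (Ideal.span {(X 0 : MvPolynomial (Fin 2) k) ^ q, X 1 ^ q,
      X 0 ^ n - X 1 ^ n}) (X 0 ^ (i + a * n) * X 1 ^ j)
    = Ideal.Quotient.mk _ (X 0 ^ i * X 1 ^ (j + a * n)) := by
  induction a generalizing j with
  | zero => simp
  | succ a ih =>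
    have e1 : i + (a + 1) * n = (i + a * n) + n := by ring
    have e2 : (j + n) + a * n = j + (a + 1) * n := by ring
    rw [e1, mk_step, ih (j + n), e2]

variable (n q b) in
lemma mk_nf (i j : ℕ) :
    Ideal.Quotient.mk (Ideal.span {(X 0 : MvPolynomial (Fin 2) k) ^ q, X 1 ^ q,
      X 0 ^ n - X 1 ^ n}) (X 0 ^ i * X 1 ^ j)
    = Ideal.Quotient.mk _ (X 0 ^ (nf1 n i) * X 1 ^ (nf2 n i j)) := by
  have h : i = nf1 n i + (i / n) * n := (Nat.mod_add_div' i n).symm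
  conv_lhs => rw [h]
  rw [mk_reduce]
  rfl

variable (n q b) in
lemma mk_Yq_zero (i j : ℕ) (h : q ≤ j) :
    Ideal.Quotient.mk (Ideal.span {(X 0 : MvPolynomial (Fin 2) k) ^ q, X 1 ^ q,
      X 0 ^ n - X 1 ^ n}) (X 0 ^ i * X 1 ^ j) = 0 := by
  have e : (X 0 ^ i * X 1 ^ j : MvPolynomial (Fin 2) k)
      = (X 0 ^ i * X 1 ^ (j - q)) * X 1 ^ q := by
    rw [mul_assoc, ← pow_add]
    congr 2
    omega
  rw [e, map_mul, mk_Yq, mul_zero]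

lemma mk_dead_zero (hqb : q % n = b) (i j : ℕ) (hd : b ≤ i ∧ q - b ≤ j) :
    Ideal.Quotient.mk (Ideal.span {(X 0 : MvPolynomial (Fin 2) k) ^ q, X 1 ^ q,
      X 0 ^ n - X 1 ^ n}) (X 0 ^ i * X 1 ^ j) = 0 := by
  set I := Ideal.span {(X 0 : MvPolynomial (Fin 2) k) ^ q, X 1 ^ q, X 0 ^ n - X 1 ^ n}
  have hq' : b + (q / n) * n = q := by
    have := Nat.mod_add_div' q n; omega
  have hbase : Ideal.Quotient.mk I (X 0 ^ b * X 1 ^ (q - b)) = 0 := by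
    have h1 : q - b = 0 + (q / n) * n := by omega
    have h2 := mk_reduce (k := k) n q (q / n) b 0
    rw [h1, ← h2, hq', pow_zero, mul_one, mk_Xq]
  have e : (X 0 ^ i * X 1 ^ j : MvPolynomial (Fin 2) k)
      = (X 0 ^ (i - b) * X 1 ^ (j - (q - b))) * (X 0 ^ b * X 1 ^ (q - b)) := by
    rw [show i = (i - b) + b by omega] 
    rw [show j = (j - (q - b)) + (q - b) by omega]
    rw [pow_add, pow_add]
    ring_nf
    rw [show (i - b) + b - b = i - b by omega,
      show (j - (q-b)) + (q-b) - (q-b) = j - (q-b) by omega]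
    ring
  rw [e, map_mul, hbase, mul_zero]

end Stmt12Aux

set_option maxHeartbeats 1000000 in
set_option synthInstance.maxHeartbeats 200000 in
open Stmt12Aux in
/-- The monomial basis of `k[X,Y]/(X^q, Y^q, X^n - Y^n)` (with `q = p^e > n`) given by
the Gröbner-basis argument: the images of the monomials `X^i·Y^j` with `i < n`, `j < q`,
and not both `b ≤ i` and `q - b ≤ j` are linearly independent and span the quotient. -/
theorem stmt12 {k : Type*} [Field k] (p : ℕ) (hp : p.Prime) [CharP k p]
    (n : ℕ) (hn : 1 < n) (hpn : ¬ p ∣ n) (e b : ℕ) (hq : n < p ^ e)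
    (hb : p ^ e ≡ b [MOD n]) (hb1 : 1 ≤ b) (hb2 : b ≤ n - 1) :
    LinearIndependent k
      (fun ij : {ij : ℕ × ℕ //
          ij.1 < n ∧ ij.2 < p ^ e ∧ ¬ (b ≤ ij.1 ∧ p ^ e - b ≤ ij.2)} =>
        Ideal.Quotient.mk
          (Ideal.span {(X 0 : MvPolynomial (Fin 2) k) ^ p ^ e, X 1 ^ p ^ e,
            X 0 ^ n - X 1 ^ n})
          (X 0 ^ ij.1.1 * X 1 ^ ij.1.2)) ∧
    Submodule.span k
      (Set.range (fun ij : {ij : ℕ × ℕ //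
          ij.1 < n ∧ ij.2 < p ^ e ∧ ¬ (b ≤ ij.1 ∧ p ^ e - b ≤ ij.2)} =>
        Ideal.Quotient.mk
          (Ideal.span {(X 0 : MvPolynomial (Fin 2) k) ^ p ^ e, X 1 ^ p ^ e,
            X 0 ^ n - X 1 ^ n})
          (X 0 ^ ij.1.1 * X 1 ^ ij.1.2))) = ⊤ := by
  classical
  set q : ℕ := p ^ e with hqdef
  set I : Ideal (MvPolynomial (Fin 2) k) :=
    Ideal.span {(X 0 : MvPolynomial (Fin 2) k) ^ q, X 1 ^ q, X 0 ^ n - X 1 ^ n} with hI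
  have hn0 : 0 < n := by omega
  have hbn : b < n := by omega
  have hqb : q % n = b := by
    have h1 : q % n = b % n := hb
    rw [h1, Nat.mod_eq_of_lt hbn]
  have hsmul : ∀ (c : k) (P : MvPolynomial (Fin 2) k),
      Ideal.Quotient.mk I (c • P) = c • Ideal.Quotient.mk I P := by
    intro c P
    have h := map_smul (Ideal.Quotient.mkₐ k I) c P
    simp only [Ideal.Quotient.mkₐ_eq_mk] at h
    exact h
  constructor
  · rw [linearIndependent_iff']
    intro s g hsum i₀ hi₀
    have h1 : Ideal.Quotient.mk I
        (∑ i ∈ s, g i • ((X 0 : MvPolynomial (Fin 2) k) ^ i.1.1 * X 1 ^ i.1.2)) = 0 := by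
      rw [map_sum]
      simp_rw [hsmul]
      exact hsum
    have h2 : (∑ i ∈ s, g i • ((X 0 : MvPolynomial (Fin 2) k) ^ i.1.1 * X 1 ^ i.1.2)) ∈ I :=
      Ideal.Quotient.eq_zero_iff_mem.mp h1
    have h3 := Nmap_ideal (q := q) (b := b) hn hq hqb h2
    rw [map_sum] at h3
    simp_rw [map_smul, Nmap_XY] at h3
    have h4 : ∀ i ∈ s, g i • gfun k n q b i.1.1 i.1.2
        = Finsupp.single (i : ℕ × ℕ) (g i) := by
      intro i hi
      rw [gfun_basis hn _ _ i.2.1 i.2.2.1 i.2.2.2, Finsupp.smul_single', mul_one]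
    rw [Finset.sum_congr rfl h4] at h3
    have h5 := DFunLike.congr_fun h3 (i₀ : ℕ × ℕ)
    rw [Finsupp.finset_sum_apply, Finset.sum_eq_single i₀
      (fun i _ hne => Finsupp.single_eq_of_ne' (fun hc => hne (Subtype.ext hc)))
      (fun h => absurd hi₀ h)] at h5
    simpa using h5
  · rw [eq_top_iff]
    rintro x -
    obtain ⟨P, rfl⟩ := Ideal.Quotient.mk_surjective x
    set M := Submodule.span k
      (Set.range (fun ij : {ij : ℕ × ℕ //
          ij.1 < n ∧ ij.2 < q ∧ ¬ (b ≤ ij.1 ∧ q - b ≤ ij.2)} =>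
        Ideal.Quotient.mk I (X 0 ^ ij.1.1 * X 1 ^ ij.1.2))) with hM
    have key : ∀ i j : ℕ, Ideal.Quotient.mk I
        ((X 0 : MvPolynomial (Fin 2) k) ^ i * X 1 ^ j) ∈ M := by
      intro i j
      rw [mk_nf]
      by_cases h1 : q ≤ nf2 n i j
      · rw [mk_Yq_zero _ _ _ _ h1]; exact M.zero_mem
      · by_cases h2 : b ≤ nf1 n i ∧ q - b ≤ nf2 n i j
        · rw [mk_dead_zero hqb _ _ h2]; exact M.zero_mem
        · apply Submodule.subset_span
          exact ⟨⟨(nf1 n i, nf2 n i j), ⟨Nat.mod_lt _ hn0, by omega, h2⟩⟩, rfl⟩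
    have hmono : ∀ d : Fin 2 →₀ ℕ, Ideal.Quotient.mk I (monomial d (1 : k)) ∈ M := by
      intro d
      have hd2 : (Finsupp.single (0 : Fin 2) (d 0) + Finsupp.single 1 (d 1)) = d := by
        ext a
        fin_cases a <;> simp [Finsupp.single_apply]
      have hd : monomial d (1 : k) = X 0 ^ (d 0) * X 1 ^ (d 1) := by
        rw [X_pow_eq_monomial, X_pow_eq_monomial, monomial_mul, mul_one, hd2]
      rw [hd]
      exact key _ _
    have hP : P ∈ Submodule.span k (Set.range ⇑(basisMonomials (Fin 2) k)) := by
      rw [Module.Basis.span_eq]; trivial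
    induction hP using Submodule.span_induction with
    | mem x hx =>
      obtain ⟨d, rfl⟩ := hx
      have : (basisMonomials (Fin 2) k) d = monomial d 1 := by rw [coe_basisMonomials]
      rw [this]
      exact hmono d
    | zero => simpa using M.zero_mem
    | add x y _ _ hx hy => rw [map_add]; exact M.add_mem hx hy
    | smul c x _ hx => rw [hsmul]; exact M.smul_mem c hx
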